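/- Let U ⊆ ℝ² be a nonempty open connected set, let γ̃ : U → M₂(ℝ) be a C¹ map whose values are invertible symmetric matrices, and let β, β' : U → ℝ be positive C¹ functions. Let u₁, u₂, u'₁, u'₂ be real-valued C² functions on U such that β γ̃ ∇u_i = β' γ̃ ∇u'_i =: H_i on U for i = 1, 2, and suppose det([H₁(x), H₂(x)]) ≠ 0 for every x ∈ U. If β(x₀) = β'(x₀) for some x₀ ∈ U, then β = β' on U. -/

import Mathlib

open Matrix Topology

/-- The gradient of a real-valued function on ℝ², as a vector of partial derivatives. -/
noncomputable def grad (u : (Fin 2 → ℝ) → ℝ) (x : Fin 2 → ℝ) : Fin 2 → ℝ :=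
  fun i => fderiv ℝ u x (Pi.single i 1)

/-- The 2×2 matrix with columns `a` and `b`. -/
def col2 (a b : Fin 2 → ℝ) : Matrix (Fin 2) (Fin 2) ℝ :=
  Matrix.of fun i => ![a i, b i]

lemma grad_contDiffAt {u : (Fin 2 → ℝ) → ℝ} {x : Fin 2 → ℝ}
    (h : ContDiffAt ℝ 2 u x) (k : Fin 2) :
    ContDiffAt ℝ 1 (fun y => grad u y k) x := by
  have h1 : ContDiffAt ℝ 1 (fderiv ℝ u) x := h.fderiv_right (by norm_num)
  exact ((ContinuousLinearMap.apply ℝ ℝ (Pi.single k 1)).contDiff.contDiffAt).comp x h1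

lemma fderiv_grad_apply {u : (Fin 2 → ℝ) → ℝ} {x : Fin 2 → ℝ}
    (h : ContDiffAt ℝ 2 u x) (k : Fin 2) (w : Fin 2 → ℝ) :
    fderiv ℝ (fun y => grad u y k) x w
      = fderiv ℝ (fderiv ℝ u) x w (Pi.single k 1) := by
  have h1 : ContDiffAt ℝ 1 (fderiv ℝ u) x := h.fderiv_right (by norm_num)
  have hd : HasFDerivAt (fderiv ℝ u) (fderiv ℝ (fderiv ℝ u) x) x :=
    (h1.differentiableAt one_ne_zero).hasFDerivAt
  have := ((ContinuousLinearMap.apply ℝ ℝ (Pi.single k 1)).hasFDerivAt.comp x hd).fderiv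
  rw [show (fun y => grad u y k)
      = (ContinuousLinearMap.apply ℝ ℝ (Pi.single k 1)) ∘ (fderiv ℝ u) from rfl, this]
  rfl

lemma grad_symm {u : (Fin 2 → ℝ) → ℝ} {x : Fin 2 → ℝ}
    (h : ContDiffAt ℝ 2 u x) (j k : Fin 2) :
    fderiv ℝ (fun y => grad u y k) x (Pi.single j 1)
      = fderiv ℝ (fun y => grad u y j) x (Pi.single k 1) := by
  rw [fderiv_grad_apply h, fderiv_grad_apply h]
  have h1 : ContDiffAt ℝ 1 (fderiv ℝ u) x := h.fderiv_right (by norm_num)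
  have hd : HasFDerivAt (fderiv ℝ u) (fderiv ℝ (fderiv ℝ u) x) x :=
    (h1.differentiableAt one_ne_zero).hasFDerivAt
  have hev : ∀ᶠ y in 𝓝 x, HasFDerivAt u (fderiv ℝ u y) y := by
    have := h.eventually (n := 2) (by norm_num)
    filter_upwards [this] with y hy
    exact (hy.differentiableAt (by norm_num)).hasFDerivAt
  exact second_derivative_symmetric_of_eventually hev hd _ _

lemma clm_zero {L : (Fin 2 → ℝ) →L[ℝ] ℝ} (h0 : L (Pi.single 0 1) = 0)
    (h1 : L (Pi.single 1 1) = 0) : L = 0 := by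
  ext w
  have hw : w = w 0 • (Pi.single 0 1 : Fin 2 → ℝ) + w 1 • (Pi.single 1 1 : Fin 2 → ℝ) := by
    ext j; fin_cases j <;> simp
  rw [hw]; simp [h0, h1]

lemma curl_rel {u v r : (Fin 2 → ℝ) → ℝ} {x : Fin 2 → ℝ}
    (hu : ContDiffAt ℝ 2 u x) (hv : ContDiffAt ℝ 2 v x)
    (hr : DifferentiableAt ℝ r x)
    (heq : ∀ᶠ y in 𝓝 x, grad v y = r y • grad u y) :
    grad u x 1 * fderiv ℝ r x (Pi.single 0 1) = grad u x 0 * fderiv ℝ r x (Pi.single 1 1) := by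
  have hfd : ∀ k : Fin 2, fderiv ℝ (fun y => grad v y k) x
      = r x • fderiv ℝ (fun y => grad u y k) x + grad u x k • fderiv ℝ r x := by
    intro k
    have heqk : (fun y => grad v y k) =ᶠ[𝓝 x] (fun y => r y * grad u y k) := by
      filter_upwards [heq] with y hy
      rw [hy]; simp
    rw [heqk.fderiv_eq]
    exact fderiv_fun_mul hr ((grad_contDiffAt hu k).differentiableAt one_ne_zero)
  have hvs := grad_symm hv 0 1
  have hus := grad_symm hu 0 1
  rw [hfd 0, hfd 1] at hvs
  simp only [ContinuousLinearMap.add_apply, ContinuousLinearMap.smul_apply, smul_eq_mul] at hvs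
  rw [hus] at hvs
  linarith

lemma det_helper {a b : Fin 2 → ℝ} {d0 d1 : ℝ}
    (h1 : a 1 * d0 = a 0 * d1) (h2 : b 1 * d0 = b 0 * d1)
    (hdet : a 0 * b 1 - a 1 * b 0 ≠ 0) : d0 = 0 ∧ d1 = 0 := by
  have e0 : d0 * (a 0 * b 1 - a 1 * b 0) = 0 := by linear_combination a 0 * h2 - b 0 * h1
  have e1 : d1 * (a 0 * b 1 - a 1 * b 0) = 0 := by linear_combination a 1 * h2 - b 1 * h1
  exact ⟨by rcases mul_eq_zero.1 e0 with h | h; exacts [h, absurd h hdet],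
    by rcases mul_eq_zero.1 e1 with h | h; exacts [h, absurd h hdet]⟩

lemma det_col2 (a b : Fin 2 → ℝ) : (col2 a b).det = a 0 * b 1 - b 0 * a 1 := by
  simp [col2, Matrix.det_fin_two]


/-- Uniqueness of the isotropic part `β` of the conductivity `γ = βγ̃` with known anisotropy:
two current-density measurements `H₁, H₂` with `det(H₁,H₂) ≠ 0` determine `β` on a connected
open set up to its value at one point. -/
theorem stmt1 (U : Set (Fin 2 → ℝ)) (hUopen : IsOpen U) (hUconn : IsConnected U)
    (γt : (Fin 2 → ℝ) → Matrix (Fin 2) (Fin 2) ℝ)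
    (hγtC : ∀ i j, ContDiffOn ℝ 1 (fun x => γt x i j) U)
    (hγtsymm : ∀ x ∈ U, (γt x).IsSymm) (hγtinv : ∀ x ∈ U, IsUnit (γt x).det)
    (β β' : (Fin 2 → ℝ) → ℝ)
    (hβC : ContDiffOn ℝ 1 β U) (hβ'C : ContDiffOn ℝ 1 β' U)
    (hβpos : ∀ x ∈ U, 0 < β x) (hβ'pos : ∀ x ∈ U, 0 < β' x)
    (u₁ u₂ v₁ v₂ : (Fin 2 → ℝ) → ℝ)
    (hu₁ : ContDiffOn ℝ 2 u₁ U) (hu₂ : ContDiffOn ℝ 2 u₂ U)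
    (hv₁ : ContDiffOn ℝ 2 v₁ U) (hv₂ : ContDiffOn ℝ 2 v₂ U)
    (H₁ H₂ : (Fin 2 → ℝ) → Fin 2 → ℝ)
    (hH₁ : ∀ x ∈ U, H₁ x = (β x • γt x).mulVec (grad u₁ x))
    (hH₂ : ∀ x ∈ U, H₂ x = (β x • γt x).mulVec (grad u₂ x))
    (hH₁' : ∀ x ∈ U, H₁ x = (β' x • γt x).mulVec (grad v₁ x))
    (hH₂' : ∀ x ∈ U, H₂ x = (β' x • γt x).mulVec (grad v₂ x))
    (hdet : ∀ x ∈ U, (col2 (H₁ x) (H₂ x)).det ≠ 0)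
    (x₀ : Fin 2 → ℝ) (hx₀ : x₀ ∈ U) (hβx₀ : β x₀ = β' x₀) :
    ∀ x ∈ U, β x = β' x := by
  have hβ'ne : ∀ x ∈ U, β' x ≠ 0 := fun x hx => (hβ'pos x hx).ne'
  set r : (Fin 2 → ℝ) → ℝ := fun y => β y / β' y with hrdef
  have hrdiff : ∀ x ∈ U, DifferentiableAt ℝ r x := by
    intro x hx
    have h1 : DifferentiableAt ℝ β x :=
      (hβC.contDiffAt (hUopen.mem_nhds hx)).differentiableAt one_ne_zero
    have h2 : DifferentiableAt ℝ β' x :=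
      (hβ'C.contDiffAt (hUopen.mem_nhds hx)).differentiableAt one_ne_zero
    have h3 : DifferentiableAt ℝ (fun y => β y * (β' y)⁻¹) x := h1.mul (h2.inv (hβ'ne x hx))
    simpa [hrdef, div_eq_mul_inv] using h3
  -- the gradients of vᵢ are r times the gradients of uᵢ
  have key : ∀ (u v : (Fin 2 → ℝ) → ℝ) (H : (Fin 2 → ℝ) → Fin 2 → ℝ),
      (∀ x ∈ U, H x = (β x • γt x).mulVec (grad u x)) →
      (∀ x ∈ U, H x = (β' x • γt x).mulVec (grad v x)) →
      ∀ y ∈ U, grad v y = r y • grad u y := by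
    intro u v H hH hH' y hy
    have h1 : γt y *ᵥ (β y • grad u y) = γt y *ᵥ (β' y • grad v y) := by
      rw [Matrix.mulVec_smul, Matrix.mulVec_smul, ← Matrix.smul_mulVec,
        ← Matrix.smul_mulVec, ← hH y hy, ← hH' y hy]
    have h2 : β y • grad u y = β' y • grad v y := by
      have h3 := congrArg (fun w => (γt y)⁻¹ *ᵥ w) h1
      simpa only [Matrix.mulVec_mulVec, Matrix.nonsing_inv_mul _ (hγtinv y hy), Matrix.one_mulVec] using h3
    funext i
    have h4 := congrFun h2 i
    simp only [Pi.smul_apply, smul_eq_mul] at h4 ⊢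
    rw [hrdef]
    field_simp [hβ'ne y hy]
    linear_combination -h4
  -- the derivative of r vanishes on U
  have hr0 : ∀ x ∈ U, fderiv ℝ r x = 0 := by
    intro x hx
    have hnx := hUopen.mem_nhds hx
    have hcu₁ := hu₁.contDiffAt hnx
    have hcu₂ := hu₂.contDiffAt hnx
    have hc1 := curl_rel hcu₁ (hv₁.contDiffAt hnx) (hrdiff x hx)
      (Filter.eventually_of_mem hnx (key u₁ v₁ H₁ hH₁ hH₁'))
    have hc2 := curl_rel hcu₂ (hv₂.contDiffAt hnx) (hrdiff x hx)
      (Filter.eventually_of_mem hnx (key u₂ v₂ H₂ hH₂ hH₂'))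
    have hH1c : ∀ k, H₁ x k = β x * (γt x k 0 * grad u₁ x 0 + γt x k 1 * grad u₁ x 1) := by
      intro k
      rw [hH₁ x hx]
      simp only [Matrix.mulVec, dotProduct, Fin.sum_univ_two, Matrix.smul_apply,
        smul_eq_mul]
      ring
    have hH2c : ∀ k, H₂ x k = β x * (γt x k 0 * grad u₂ x 0 + γt x k 1 * grad u₂ x 1) := by
      intro k
      rw [hH₂ x hx]
      simp only [Matrix.mulVec, dotProduct, Fin.sum_univ_two, Matrix.smul_apply,
        smul_eq_mul]
      ring
    have hgdet : grad u₁ x 0 * grad u₂ x 1 - grad u₁ x 1 * grad u₂ x 0 ≠ 0 := by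
      intro hcon
      apply hdet x hx
      have hdd : (col2 (H₁ x) (H₂ x)).det = β x ^ 2 * (γt x).det *
          (grad u₁ x 0 * grad u₂ x 1 - grad u₁ x 1 * grad u₂ x 0) := by
        rw [det_col2, hH1c 0, hH1c 1, hH2c 0, hH2c 1, Matrix.det_fin_two]
        ring
      rw [hdd, hcon, mul_zero]
    obtain ⟨h0, h1⟩ := det_helper hc1 hc2 hgdet
    exact clm_zero h0 h1
  -- r is locally constant on U
  have hlocal : ∀ x ∈ U, ∀ᶠ y in 𝓝 x, r y = r x := by
    intro x hx
    obtain ⟨ε, hε, hball⟩ := Metric.isOpen_iff.1 hUopen x hx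
    filter_upwards [Metric.ball_mem_nhds x hε] with y hy
    exact (convex_ball x ε).is_const_of_fderivWithin_eq_zero
      (fun z hz => (hrdiff z (hball hz)).differentiableWithinAt)
      (fun z hz => by
        rw [fderivWithin_of_isOpen Metric.isOpen_ball hz]; exact hr0 z (hball hz))
      hy (Metric.mem_ball_self hε)
  have hrx₀ : r x₀ = 1 := by
    simp only [hrdef]
    rw [hβx₀, div_self (hβ'ne x₀ hx₀)]
  intro x hx
  have hrx : r x = 1 := by
    by_contra hne
    have hSo : IsOpen {y | y ∈ U ∧ r y = 1} := by
      rw [isOpen_iff_mem_nhds]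
      rintro y ⟨hyU, hy1⟩
      filter_upwards [hlocal y hyU, hUopen.mem_nhds hyU] with z hz hzU
      exact ⟨hzU, hz.trans hy1⟩
    have hTo : IsOpen {y | y ∈ U ∧ r y ≠ 1} := by
      rw [isOpen_iff_mem_nhds]
      rintro y ⟨hyU, hy1⟩
      filter_upwards [hlocal y hyU, hUopen.mem_nhds hyU] with z hz hzU
      exact ⟨hzU, hz ▸ hy1⟩
    obtain ⟨z, -, ⟨-, hz1⟩, -, hz2⟩ := hUconn.isPreconnected _ _ hSo hTo
      (fun y hy => by by_cases h : r y = 1; exacts [Or.inl ⟨hy, h⟩, Or.inr ⟨hy, h⟩])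
      ⟨x₀, hx₀, hx₀, hrx₀⟩ ⟨x, hx, hx, hne⟩
    exact hz2 hz1
  have hfin : β x / β' x = 1 := hrx
  field_simp [hβ'ne x hx] at hfin
  exact hfin
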